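/- Weighted Cauchy–Schwarz bound showing the cutoff energy is controlled: let u be Hölder continuous with |u(x)| ≤ C dist(x, Λ)^s near a closed set Λ ⊆ R^{n-1}×{0}, where s = (1-a)/2 and -1 < a < 1. Define η_k(x) = min(1, max(0, k·dist(x,Λ) - 1)). Then ∫_{B ∩ {dist(x,Λ) ≤ 2/k}} |x_n|^a u² |∇η_k|² dx ≤ C' for a constant C' independent of k. -/

import Mathlib

open MeasureTheory Metric Set

open intervalIntegral in
lemma myIntegralRpow {a r b : ℝ} (h : -1 < r) : ∫ x in a..b, x ^ r = (b ^ (r + 1) - a ^ (r + 1)) / (r + 1) := integral_rpow (Or.inl h)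

lemma coordDistLe {m : ℕ} (x y : EuclideanSpace ℝ (Fin m)) (i : Fin m) :
    dist (x i) (y i) ≤ dist x y := by
  rw [EuclideanSpace.dist_eq]
  have h := Finset.single_le_sum (f := fun j => dist (x j) (y j) ^ 2)
    (fun j _ => sq_nonneg _) (Finset.mem_univ i)
  calc dist (x i) (y i) = Real.sqrt (dist (x i) (y i) ^ 2) := (Real.sqrt_sq dist_nonneg).symm
    _ ≤ _ := Real.sqrt_le_sqrt h

lemma absCoordLeInfDist {m : ℕ} {Λ : Set (EuclideanSpace ℝ (Fin m))} (hne : Λ.Nonempty)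
    {i : Fin m} (hΛ : Λ ⊆ {x | x i = 0}) (x : EuclideanSpace ℝ (Fin m)) :
    |x i| ≤ infDist x Λ := by
  by_contra h
  push_neg at h
  obtain ⟨y, hy, hxy⟩ := (infDist_lt_iff hne).1 h
  have h1 : dist (x i) (y i) ≤ dist x y := coordDistLe x y i
  have h2 : y i = 0 := hΛ hy
  rw [h2, Real.dist_eq, sub_zero] at h1
  linarith

lemma oneDimII {a δ : ℝ} (ha : -1 < a) (hδ : 0 < δ) :
    IntervalIntegrable (fun t : ℝ => |t| ^ a) volume 0 δ := by
  have h := intervalIntegral.intervalIntegrable_rpow' (a := 0) (b := δ) ha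
  rw [intervalIntegrable_iff] at h ⊢
  refine h.congr_fun ?_ measurableSet_uIoc
  intro t ht
  rw [uIoc_of_le hδ.le] at ht
  show t ^ a = |t| ^ a
  rw [abs_of_pos ht.1]

lemma oneDimII' {a δ : ℝ} (ha : -1 < a) (hδ : 0 < δ) :
    IntervalIntegrable (fun t : ℝ => |t| ^ a) volume (-δ) 0 := by
  rw [IntervalIntegrable.iff_comp_neg]
  simp only [abs_neg, neg_neg, neg_zero]
  exact (oneDimII ha hδ).symm

lemma oneDimVal {a δ : ℝ} (ha : -1 < a) (hδ : 0 < δ) :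
    ∫ t in Icc (-δ) δ, |t| ^ a = 2 * δ ^ (a + 1) / (a + 1) := by
  have ha1 : a + 1 ≠ 0 := by linarith
  have hval : ∫ t in (0:ℝ)..δ, |t| ^ a = δ ^ (a + 1) / (a + 1) := by
    rw [show (∫ t in (0:ℝ)..δ, |t| ^ a) = ∫ t in (0:ℝ)..δ, t ^ a from intervalIntegral.integral_congr ?_]
    · rw [myIntegralRpow ha, Real.zero_rpow ha1, sub_zero]
    · intro t ht
      rw [uIcc_of_le hδ.le] at ht
      simp [abs_of_nonneg ht.1]
  have hneg : ∫ t in (-δ)..(0:ℝ), |t| ^ a = δ ^ (a + 1) / (a + 1) := by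
    have := intervalIntegral.integral_comp_neg (a := 0) (b := δ) (fun t : ℝ => |t| ^ a)
    simp only [abs_neg, neg_zero] at this
    rw [← this, hval]
  have hIcc : ∫ t in Icc (-δ) δ, |t| ^ a = ∫ t in (-δ)..δ, |t| ^ a := by
    rw [intervalIntegral.integral_of_le (by linarith), integral_Icc_eq_integral_Ioc]
  rw [hIcc, ← intervalIntegral.integral_add_adjacent_intervals (oneDimII' ha hδ) (oneDimII ha hδ),
    hval, hneg]
  ring
open MeasureTheory Metric Set


/-- uniform bound on the cutoff energy: let `Λ` be a nonempty closed subset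
of the thin space `{x_n = 0}` in `ℝᴺ` (ambient dimension `N = n+1`), `-1 < a < 1`,
`s = (1-a)/2`, and let `u` satisfy `|u(x)| ≤ C dist(x,Λ)^s` on a fixed ball `B`. With the
cutoff `η_k(x) = min(1, max(0, k·dist(x,Λ) - 1))`, the weighted integrals
`∫_{B ∩ {dist(x,Λ) ≤ 2/k}} |x_n|^a u² |∇η_k|² dx` are bounded by a constant `C'`
independent of `k`. -/
theorem stmt14 (n : ℕ) (a : ℝ) (ha : -1 < a) (ha' : a < 1)
    (Λ : Set (EuclideanSpace ℝ (Fin (n + 1)))) (hΛc : IsClosed Λ) (hΛne : Λ.Nonempty)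
    (hΛ : Λ ⊆ {x | x (Fin.last n) = 0})
    (x₀ : EuclideanSpace ℝ (Fin (n + 1))) (R : ℝ) (hR : 0 < R)
    (u : EuclideanSpace ℝ (Fin (n + 1)) → ℝ) (hum : Measurable u)
    (C : ℝ) (hC : 0 < C)
    (hu : ∀ x ∈ ball x₀ R, |u x| ≤ C * (Metric.infDist x Λ) ^ ((1 - a) / 2)) :
    ∃ C' : ℝ, ∀ k : ℕ, 1 ≤ k →
      (∫ x in ball x₀ R ∩ {x | Metric.infDist x Λ ≤ 2 / (k : ℝ)},
          |x (Fin.last n)| ^ a * (u x) ^ 2 *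
            ‖fderiv ℝ (fun y => min 1 (max 0 ((k : ℝ) * Metric.infDist y Λ - 1))) x‖ ^ 2) ≤
        C' := by
  set L : Fin (n + 1) := Fin.last n
  refine ⟨8 * C ^ 2 * (2 * R) ^ n / (a + 1), fun k hk => ?_⟩
  have hkpos : (0 : ℝ) < k := by exact_mod_cast hk
  set δ : ℝ := 2 / (k : ℝ) with hδdef
  have hδ : 0 < δ := by positivity
  set M : ℝ := C ^ 2 * δ ^ (1 - a) * (k : ℝ) ^ 2 with hMdef
  have hM : 0 ≤ M := by positivity
  set S : Set (EuclideanSpace ℝ (Fin (n + 1))) :=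
    ball x₀ R ∩ {x | Metric.infDist x Λ ≤ δ} with hSdef
  have hSm : MeasurableSet S :=
    measurableSet_ball.inter
      ((isClosed_le (continuous_infDist_pt Λ) continuous_const).measurableSet)
  set f : Fin (n + 1) → ℝ → ℝ := fun i t =>
    if i = L then Set.indicator (Icc (-δ) δ) (fun s => |s| ^ a) t
    else Set.indicator (Icc (x₀ i - R) (x₀ i + R)) 1 t with hfdef
  -- each 1D factor is nonnegative and integrable
  have hfnn : ∀ i t, 0 ≤ f i t := by
    intro i t
    by_cases h : i = L
    · simp only [hfdef, if_pos h]
      exact Set.indicator_nonneg (fun s _ => Real.rpow_nonneg (abs_nonneg s) a) t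
    · simp only [hfdef, if_neg h]
      exact Set.indicator_nonneg (fun s _ => zero_le_one) t
  have hfint : ∀ i, Integrable (f i) := by
    intro i
    by_cases h : i = L
    · simp only [hfdef, h, if_true]
      rw [integrable_indicator_iff measurableSet_Icc]
      have h2 : IntervalIntegrable (fun t : ℝ => |t| ^ a) volume (-δ) δ :=
        (oneDimII' ha hδ).trans (oneDimII ha hδ)
      rw [intervalIntegrable_iff, uIoc_of_le (by linarith)] at h2
      exact (integrableOn_Icc_iff_integrableOn_Ioc).2 h2
    · simp only [hfdef, if_neg h]
      rw [integrable_indicator_iff measurableSet_Icc]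
      exact integrableOn_const measure_Icc_lt_top.ne
  set g : EuclideanSpace ℝ (Fin (n + 1)) → ℝ := fun x => M * ∏ i, f i (x i) with hgdef
  have hgnn : ∀ x, 0 ≤ g x := fun x =>
    mul_nonneg hM (Finset.prod_nonneg fun i _ => hfnn i (x i))
  -- integrability of g via the measurable equiv with the pi space
  have e := EuclideanSpace.volume_preserving_symm_measurableEquiv_toLp (Fin (n + 1))
  have hgint : Integrable g := by
    apply Integrable.const_mul
    have hpi : Integrable (fun y : Fin (n + 1) → ℝ => ∏ i, f i (y i)) :=
      Integrable.fintype_prod_dep hfint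
    have := (e.integrable_comp_emb
      (MeasurableEquiv.toLp 2 (Fin (n + 1) → ℝ)).symm.measurableEmbedding).2 hpi
    exact this
  -- pointwise bound
  have hpt : ∀ x, S.indicator
      (fun x => |x L| ^ a * (u x) ^ 2 *
        ‖fderiv ℝ (fun y => min 1 (max 0 ((k : ℝ) * Metric.infDist y Λ - 1))) x‖ ^ 2) x ≤ g x := by
    intro x
    by_cases hx : x ∈ S
    · rw [Set.indicator_of_mem hx]
      obtain ⟨hxb, hxd⟩ := hx
      have hxd' : Metric.infDist x Λ ≤ δ := hxd
      have hd0 : 0 ≤ Metric.infDist x Λ := infDist_nonneg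
      -- bound on u
      have hu2 : (u x) ^ 2 ≤ C ^ 2 * δ ^ (1 - a) := by
        have h1 := hu x hxb
        have h2 : (u x) ^ 2 ≤ (C * (Metric.infDist x Λ) ^ ((1 - a) / 2)) ^ 2 := by
          rw [← sq_abs]
          exact pow_le_pow_left₀ (abs_nonneg _) h1 2
        have h3 : (C * (Metric.infDist x Λ) ^ ((1 - a) / 2)) ^ 2
            = C ^ 2 * (Metric.infDist x Λ) ^ (1 - a) := by
          rw [mul_pow, ← Real.rpow_natCast ((Metric.infDist x Λ) ^ ((1 - a) / 2)) 2,
            ← Real.rpow_mul hd0]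
          norm_num
        have h4 : (Metric.infDist x Λ) ^ (1 - a) ≤ δ ^ (1 - a) :=
          Real.rpow_le_rpow hd0 hxd' (by linarith)
        calc (u x) ^ 2 ≤ C ^ 2 * (Metric.infDist x Λ) ^ (1 - a) := by rw [← h3]; exact h2
          _ ≤ C ^ 2 * δ ^ (1 - a) := by
              exact mul_le_mul_of_nonneg_left h4 (by positivity)
      -- bound on the gradient
      have hgrad : ‖fderiv ℝ (fun y => min 1 (max 0 ((k : ℝ) * Metric.infDist y Λ - 1))) x‖
          ≤ (k : ℝ) := by
        have hsub : LipschitzWith 1 (fun t : ℝ => t - 1) :=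
          LipschitzWith.of_dist_le_mul fun s t => by
            rw [Real.dist_eq, Real.dist_eq]; simp
        have houter : LipschitzWith 1 (fun t : ℝ => min 1 (max 0 (t - 1))) :=
          by simpa using ((hsub.const_max 0).const_min 1)
        have hinner : LipschitzWith (‖(k : ℝ)‖₊ * 1)
            (fun y : EuclideanSpace ℝ (Fin (n + 1)) => (k : ℝ) * Metric.infDist y Λ) :=
          (lipschitzWith_smul ((k : ℝ))).comp (lipschitz_infDist_pt Λ)
        have hcomp : LipschitzWith (1 * (‖(k : ℝ)‖₊ * 1))
            (fun y => min 1 (max 0 ((k : ℝ) * Metric.infDist y Λ - 1))) :=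
          houter.comp hinner
        have := norm_fderiv_le_of_lipschitz ℝ
          (x₀ := x) hcomp
        calc _ ≤ ((1 * (‖(k : ℝ)‖₊ * 1) : NNReal) : ℝ) := this
          _ = (k : ℝ) := by
            simp [Real.norm_eq_abs, abs_of_nonneg hkpos.le]
      have hgrad2 : ‖fderiv ℝ (fun y => min 1 (max 0 ((k : ℝ) * Metric.infDist y Λ - 1))) x‖ ^ 2
          ≤ (k : ℝ) ^ 2 := pow_le_pow_left₀ (norm_nonneg _) hgrad 2
      -- product equals |x L| ^ a
      have hprodeq : ∏ i, f i (x i) = |x L| ^ a := by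
        rw [Finset.prod_eq_single L]
        · have hxL : x L ∈ Icc (-δ) δ := by
            have h1 : |x L| ≤ Metric.infDist x Λ := absCoordLeInfDist hΛne hΛ x
            have h2 : |x L| ≤ δ := h1.trans hxd'
            constructor <;> [linarith [neg_abs_le (x L)]; linarith [le_abs_self (x L)]]
          simp [hfdef, Set.indicator_of_mem hxL]
        · intro i _ hi
          have hxi : x i ∈ Icc (x₀ i - R) (x₀ i + R) := by
            have h1 : dist (x i) (x₀ i) ≤ dist x x₀ := coordDistLe x x₀ i
            have h2 : dist x x₀ < R := mem_ball.1 hxb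
            rw [Real.dist_eq] at h1
            constructor <;> [linarith [neg_abs_le (x i - x₀ i)]; linarith [le_abs_self (x i - x₀ i)]]
          simp [hfdef, if_neg hi, Set.indicator_of_mem hxi]
        · simp
      have hrnn : (0:ℝ) ≤ |x L| ^ a := Real.rpow_nonneg (abs_nonneg _) a
      calc |x L| ^ a * (u x) ^ 2 *
            ‖fderiv ℝ (fun y => min 1 (max 0 ((k : ℝ) * Metric.infDist y Λ - 1))) x‖ ^ 2
          ≤ |x L| ^ a * (C ^ 2 * δ ^ (1 - a)) * (k : ℝ) ^ 2 := by
            apply mul_le_mul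
            · exact mul_le_mul_of_nonneg_left hu2 hrnn
            · exact hgrad2
            · positivity
            · positivity
        _ = g x := by rw [hgdef]; simp only; rw [hprodeq, hMdef]; ring
    · rw [Set.indicator_of_notMem hx]
      exact hgnn x
  -- compare the integrals
  have hmono : (∫ x in S,
      |x L| ^ a * (u x) ^ 2 *
        ‖fderiv ℝ (fun y => min 1 (max 0 ((k : ℝ) * Metric.infDist y Λ - 1))) x‖ ^ 2)
      ≤ ∫ x, g x := by
    rw [← integral_indicator hSm]
    refine integral_mono_of_nonneg ?_ hgint ?_
    · filter_upwards with x
      apply Set.indicator_nonneg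
      intro y _
      positivity
    · filter_upwards with x using hpt x
  -- compute the integral of g
  have hgval : ∫ x, g x = M * ((2 * δ ^ (a + 1) / (a + 1)) * (2 * R) ^ n) := by
    rw [hgdef]
    rw [integral_const_mul]
    congr 1
    have htrans := e.integral_comp' (fun y : Fin (n + 1) → ℝ => ∏ i, f i (y i))
    simp only [MeasurableEquiv.coe_toLp_symm] at htrans
    rw [htrans, volume_pi, integral_fintype_prod_eq_prod]
    rw [← Finset.mul_prod_erase Finset.univ _ (Finset.mem_univ L)]
    have h1 : (∫ t, f L t) = 2 * δ ^ (a + 1) / (a + 1) := by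
      simp only [hfdef, if_pos rfl]
      rw [integral_indicator measurableSet_Icc]
      exact oneDimVal ha hδ
    have h2 : ∀ i ∈ Finset.univ.erase L, (∫ t, f i t) = 2 * R := by
      intro i hi
      have hiL : i ≠ L := Finset.ne_of_mem_erase hi
      simp only [hfdef, if_neg hiL]
      rw [integral_indicator measurableSet_Icc]
      simp only [Pi.one_apply]
      rw [setIntegral_const, measureReal_def, Real.volume_Icc,
        smul_eq_mul, mul_one, ENNReal.toReal_ofReal (by linarith)]
      ring
    rw [h1, Finset.prod_congr rfl h2, Finset.prod_const]
    have hcard : (Finset.univ.erase L).card = n := by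
      rw [Finset.card_erase_of_mem (Finset.mem_univ L), Finset.card_univ]
      simp
    rw [hcard]
  -- final arithmetic
  have hkδ : (k : ℝ) * δ = 2 := by
    rw [hδdef]; field_simp
  have hδ2 : δ ^ (1 - a) * δ ^ (a + 1) = δ ^ 2 := by
    rw [← Real.rpow_add hδ]
    have h21 : (1:ℝ) - a + (a + 1) = 2 := by ring
    rw [h21, Real.rpow_two, sq]
  have hfinal : M * ((2 * δ ^ (a + 1) / (a + 1)) * (2 * R) ^ n)
      = 8 * C ^ 2 * (2 * R) ^ n / (a + 1) := by
    rw [hMdef]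
    have : C ^ 2 * δ ^ (1 - a) * (k : ℝ) ^ 2 * (2 * δ ^ (a + 1) / (a + 1) * (2 * R) ^ n)
        = C ^ 2 * 2 * (2 * R) ^ n / (a + 1) * (δ ^ (1 - a) * δ ^ (a + 1)) * (k : ℝ) ^ 2 := by
      ring
    rw [this, hδ2]
    have h4 : δ ^ 2 * (k : ℝ) ^ 2 = 4 := by
      have : δ ^ 2 * (k : ℝ) ^ 2 = ((k : ℝ) * δ) ^ 2 := by ring
      rw [this, hkδ]; norm_num
    calc C ^ 2 * 2 * (2 * R) ^ n / (a + 1) * δ ^ 2 * (k : ℝ) ^ 2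
        = C ^ 2 * 2 * (2 * R) ^ n / (a + 1) * (δ ^ 2 * (k : ℝ) ^ 2) := by ring
      _ = 8 * C ^ 2 * (2 * R) ^ n / (a + 1) := by rw [h4]; ring
  calc _ ≤ ∫ x, g x := hmono
    _ = _ := by rw [hgval, hfinal]
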